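/- Let A be a complex semisimple unital Banach algebra. Suppose that for all a, b ∈ A the following are equivalent: (i) ρ(ax) ≤ ρ(bx) for all x ∈ A; (ii) a = λb for some λ ∈ ℂ with |λ| ≤ 1. Then A is a prime algebra. -/

import Mathlib

open Complex

noncomputable section

/-- The nonzero spectrum `σ'(x) = σ(x) \ {0}` of an element of a complex algebra. -/
def nzSpec {A : Type*} [Ring A] [Algebra ℂ A] (x : A) : Set ℂ :=
  spectrum ℂ x \ {0}

/-- The spectral rank of an element: `rank a = sup_{x ∈ A} #σ'(xa)`, valued in `ℕ∞`. -/
noncomputable def srank {A : Type*} [Ring A] [Algebra ℂ A] (a : A) : ℕ∞ :=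
  ⨆ x : A, (nzSpec (x * a)).encard

/-- The socle of `A`: the set of finite-rank elements. -/
def socle (A : Type*) [Ring A] [Algebra ℂ A] : Set A :=
  {a : A | srank a ≠ ⊤}

/-- `A` is (Jacobson) semisimple: its Jacobson radical is `{0}`. -/
def JacobsonSemisimple (A : Type*) [Ring A] : Prop :=
  TwoSidedIdeal.jacobson (⊥ : TwoSidedIdeal A) = ⊥

/-- `Soc A` is a minimal two-sided ideal: it is a nonzero two-sided ideal containing
no two-sided ideals other than `{0}` and itself. -/
def SocleIsMinimalTwoSidedIdeal (A : Type*) [Ring A] [Algebra ℂ A] : Prop :=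
  ∃ I : TwoSidedIdeal A, (I : Set A) = socle A ∧ I ≠ ⊥ ∧
    ∀ J : TwoSidedIdeal A, J ≤ I → J = ⊥ ∨ J = I

/-- `A` is a prime algebra: all nonzero two-sided ideals `I, J` satisfy `IJ ≠ {0}`. -/
def IsPrimeAlgebra (A : Type*) [Ring A] : Prop :=
  ∀ I J : TwoSidedIdeal A, I ≠ ⊥ → J ≠ ⊥ → ∃ x ∈ I, ∃ y ∈ J, x * y ≠ 0

/-- The left annihilator of the socle equals `{0}`. -/
def LeftAnnSocleTrivial (A : Type*) [Ring A] [Algebra ℂ A] : Prop :=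
  {x : A | ∀ y ∈ socle A, x * y = 0} = {0}


section Aux
variable {A : Type*} [NormedRing A] [NormedAlgebra ℂ A]

omit [NormedAlgebra ℂ A] in
lemma aux_unit_of_inv (m w : A) (h1 : m * w = 1) (h2 : w * m = 1) : IsUnit m :=
  ⟨⟨m, w, h1, h2⟩, rfl⟩

lemma aux_sq_zero_spectralRadius (n : A) (hn : n * n = 0) : spectralRadius ℂ n = 0 := by
  have hspec : spectrum ℂ n ⊆ {0} := by
    intro lam hlam
    by_contra hl
    simp only [Set.mem_singleton_iff] at hl
    apply spectrum.notMem_iff.mpr ?_ hlam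
    apply aux_unit_of_inv _ (lam⁻¹ • 1 + (lam⁻¹ * lam⁻¹) • n)
    · simp only [Algebra.algebraMap_eq_smul_one, sub_mul, mul_sub, smul_sub, sub_smul, mul_add, add_mul, smul_mul_assoc,
        mul_smul_comm, one_mul, mul_one, smul_smul, hn, smul_zero]
      match_scalars <;> field_simp <;> ring
    · simp only [Algebra.algebraMap_eq_smul_one, sub_mul, mul_sub, smul_sub, sub_smul, mul_add, add_mul, smul_mul_assoc,
        mul_smul_comm, one_mul, mul_one, smul_smul, hn, smul_zero]
      match_scalars <;> field_simp <;> ring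
  refine le_antisymm ?_ (zero_le)
  rw [spectralRadius]
  refine iSup₂_le fun k hk => ?_
  have := hspec hk
  simp_all

lemma aux_radius_le (u v : A) (huv : u * v = 0) (hvu : v * u = 0) :
    spectralRadius ℂ v ≤ spectralRadius ℂ (u + v) := by
  have hsub : spectrum ℂ v ⊆ spectrum ℂ (u + v) ∪ {0} := by
    intro lam hlam
    by_contra hl
    simp only [Set.mem_union, Set.mem_singleton_iff, not_or] at hl
    obtain ⟨hmem, hne⟩ := hl
    rw [spectrum.notMem_iff] at hmem
    obtain ⟨W, hW⟩ := hmem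
    set m : A := algebraMap ℂ A lam - (u + v) with hm
    set w : A := ↑W⁻¹ with hw
    have hmw : m * w = 1 := by rw [hw, ← hW]; exact W.mul_inv
    have hwm : w * m = 1 := by rw [hw, ← hW]; exact W.inv_mul
    have hcomm : m * u = u * m := by
      simp only [hm, Algebra.algebraMap_eq_smul_one, sub_mul, mul_sub, smul_mul_assoc,
        mul_smul_comm, one_mul, mul_one, add_mul, mul_add, huv, hvu]
    have hwu : w * u = u * w := by
      calc w * u = (w * u) * (m * w) := by rw [hmw, mul_one]
        _ = w * (u * m) * w := by simp only [mul_assoc]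
        _ = w * (m * u) * w := by rw [← hcomm]
        _ = u * w := by rw [← mul_assoc w m u, hwm, one_mul]
    apply spectrum.notMem_iff.mpr ?_ hlam
    apply aux_unit_of_inv _ (w - lam⁻¹ • (u * w))
    · have key : (algebraMap ℂ A lam - v) * (w - lam⁻¹ • (u * w)) =
          m * w + lam⁻¹ • ((v * u) * w) := by
        simp only [hm, Algebra.algebraMap_eq_smul_one, mul_sub, sub_mul, mul_smul_comm,
          smul_mul_assoc, one_mul, smul_smul, add_mul, mul_assoc]
        match_scalars <;> field_simp
      rw [key, hmw, hvu, zero_mul, smul_zero, add_zero]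
    · have huwv : u * (w * v) = 0 := by rw [← mul_assoc, ← hwu, mul_assoc, huv, mul_zero]
      have key : (w - lam⁻¹ • (u * w)) * (algebraMap ℂ A lam - v) =
          w * m + lam⁻¹ • (u * (w * v)) - (u * w) + w * u := by
        simp only [hm, Algebra.algebraMap_eq_smul_one, mul_sub, sub_mul, mul_smul_comm,
          smul_mul_assoc, mul_one, smul_smul, mul_add, mul_assoc]
        match_scalars <;> field_simp <;> ring
      rw [key, hwm, huwv, smul_zero, add_zero, hwu, sub_add_cancel]
  rw [spectralRadius]
  refine iSup₂_le fun k hk => ?_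
  rcases hsub hk with h | h
  · exact le_iSup₂ (f := fun k (_ : k ∈ spectrum ℂ (u+v)) => (‖k‖₊ : ENNReal)) k h
  · simp_all

end Aux

theorem prime_of_spectralRadius_domination
    {A : Type*} [NormedRing A] [NormOneClass A] [NormedAlgebra ℂ A] [CompleteSpace A]
    (hss : JacobsonSemisimple A)
    (h : ∀ a b : A,
      ((∀ x : A, spectralRadius ℂ (a * x) ≤ spectralRadius ℂ (b * x)) ↔
        ∃ lam : ℂ, ‖lam‖ ≤ 1 ∧ a = lam • b)) :
    IsPrimeAlgebra A := by
  intro I J hI hJ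
  by_contra hcon
  push_neg at hcon
  -- extract nonzero elements
  have hex : ∀ K : TwoSidedIdeal A, K ≠ ⊥ → ∃ c ∈ K, c ≠ 0 := by
    intro K hK
    by_contra h'
    push_neg at h'
    exact hK (eq_bot_iff.mpr fun x hx => by simpa using h' x hx)
  obtain ⟨a, haI, ha0⟩ := hex I hI
  obtain ⟨b, hbJ, hb0⟩ := hex J hJ
  -- the zero test
  have zero_test : ∀ c : A, (∀ x : A, c * x * (c * x) = 0) → c = 0 := by
    intro c hc
    obtain ⟨lam, -, hlam⟩ := (h c 0).mp (fun x => by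
      rw [aux_sq_zero_spectralRadius (c * x) (hc x)]; exact zero_le)
    simpa using hlam
  have hab : ∀ x, a * x * b = 0 := fun x => by
    have := hcon a haI (x * b) (J.mul_mem_left x b hbJ)
    rwa [← mul_assoc] at this
  have hba : ∀ y, b * y * a = 0 := by
    intro y
    refine zero_test _ (fun x => ?_)
    calc b * y * a * x * (b * y * a * x) = ((b * y) * ((a * x * b) * (y * (a * x)))) := by noncomm_ring
      _ = 0 := by rw [hab x, zero_mul, mul_zero]
  have huv : ∀ x : A, (a * x) * (b * x) = 0 := fun x => by
    calc (a * x) * (b * x) = (a * x * b) * x := by noncomm_ring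
      _ = 0 := by rw [hab x, zero_mul]
  have hvu : ∀ x : A, (b * x) * (a * x) = 0 := fun x => by
    calc (b * x) * (a * x) = (b * x * a) * x := by noncomm_ring
      _ = 0 := by rw [hba x, zero_mul]
  have hdom : ∀ x : A, spectralRadius ℂ (b * x) ≤ spectralRadius ℂ ((a + b) * x) := by
    intro x
    have := aux_radius_le (a * x) (b * x) (huv x) (hvu x)
    rwa [← add_mul] at this
  obtain ⟨lam, -, hblam⟩ := (h b (a + b)).mp hdom
  by_cases hl0 : lam = 0
  · exact hb0 (by rw [hblam, hl0, zero_smul])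
  · have ha_eq : a = (lam⁻¹ * (1 - lam)) • b := by
      have h2 : lam • a = (1 - lam) • b := by
        rw [sub_smul, one_smul]
        calc lam • a = (lam • a + lam • b) - lam • b := by abel
          _ = b - lam • b := by rw [← smul_add, ← hblam]
      calc a = lam⁻¹ • (lam • a) := by rw [smul_smul, inv_mul_cancel₀ hl0, one_smul]
        _ = (lam⁻¹ * (1 - lam)) • b := by rw [h2, smul_smul]
    have haxa : ∀ x : A, a * x * (a * x) = 0 := by
      intro x
      nth_rewrite 2 [ha_eq]
      rw [smul_mul_assoc, mul_smul_comm, huv x, smul_zero]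
    exact ha0 (zero_test a haxa)
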